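/- arXiv:2103.01407 — 3 statements merged into one kernel-verified Lean document; each statement's English description precedes it below -/
import Mathlib

section
/- Let T be the tree obtained from 2 disjoint copies of P₂ and k ≥ 0 disjoint copies of P₃ by fixing a vertex v₀ in one copy of P₂ and joining v₀ by an edge to one vertex of the other copy of P₂ and to one vertex of each copy of P₃. Then ψ(T) = 2k + 3. -/
open Finset

variable {V : Type*} [Fintype V] [DecidableEq V]

/-- `F` is a dissociation set: it induces a subgraph of maximum degree at most 1,
i.e. every vertex of `F` has at most one neighbor in `F`. -/
def IsDissoc (G : SimpleGraph V) (F : Finset V) : Prop :=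
  ∀ v ∈ F, ∀ u ∈ F, ∀ w ∈ F, G.Adj v u → G.Adj v w → u = w

open Classical in
/-- The dissociation number: maximum cardinality of a dissociation set. -/
noncomputable def dissocNum (G : SimpleGraph V) : ℕ :=
  (Finset.univ.filter fun F : Finset V => IsDissoc G F).sup Finset.card

/-- A maximum dissociation set. -/
def IsMaxDissoc (G : SimpleGraph V) (F : Finset V) : Prop :=
  IsDissoc G F ∧ F.card = dissocNum G

open Classical in
/-- The number of maximum dissociation sets. -/
noncomputable def numMaxDissoc (G : SimpleGraph V) : ℕ :=
  (Finset.univ.filter fun F : Finset V => IsMaxDissoc G F).card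

/-- Vertices of the tree built from `2P₂ ∪ kP₃`: the fixed edge `v0–a`, the other edge
`b1–b2`, and `k` paths `p i 0 – p i 1 – p i 2`. -/
inductive T1V (k : ℕ)
  | v0 : T1V k
  | a : T1V k
  | b1 : T1V k
  | b2 : T1V k
  | p : Fin k → Fin 3 → T1V k
  deriving DecidableEq, Fintype

/-- The tree obtained from `2P₂ ∪ kP₃` by joining the vertex `v0` of the fixed `P₂`
to a vertex `b1` of the other `P₂` and to the leaf `p i 0` of each `P₃`. -/
def T1 (k : ℕ) : SimpleGraph (T1V k) :=
  SimpleGraph.fromRel fun x y =>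
    (x = T1V.v0 ∧ y = T1V.a) ∨ (x = T1V.v0 ∧ y = T1V.b1) ∨ (x = T1V.b1 ∧ y = T1V.b2) ∨
    (∃ i, x = T1V.v0 ∧ y = T1V.p i 0) ∨
    (∃ i, x = T1V.p i 0 ∧ y = T1V.p i 1) ∨
    (∃ i, x = T1V.p i 1 ∧ y = T1V.p i 2)


open T1V in
lemma T1_dissoc_card_le (k : ℕ) (F : Finset (T1V k)) (hd : IsDissoc (T1 k) F) :
    F.card ≤ 2 * k + 3 := by
  classical
  have hadj_v0a : (T1 k).Adj (v0 : T1V k) a := by simp [T1, SimpleGraph.fromRel_adj]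
  have hadj_v0b1 : (T1 k).Adj (v0 : T1V k) b1 := by simp [T1, SimpleGraph.fromRel_adj]
  have hadj_p10 : ∀ i : Fin k, (T1 k).Adj (p i 1) (p i 0) := by
    intro i; simp [T1, SimpleGraph.fromRel_adj]
  have hadj_p12 : ∀ i : Fin k, (T1 k).Adj (p i 1) (p i 2) := by
    intro i; simp [T1, SimpleGraph.fromRel_adj]
  set c : T1V k → Option (Fin k) := fun v => match v with
    | p i _ => some i
    | _ => none with hc
  have hcard : F.card = ∑ o ∈ (Finset.univ : Finset (Option (Fin k))),
      (F.filter fun v => c v = o).card :=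
    Finset.card_eq_sum_card_fiberwise (fun v _ => Finset.mem_univ _)
  have hnone : (F.filter fun v => c v = none).card ≤ 3 := by
    have hsub : (F.filter fun v => c v = none) ⊆ ({v0, a, b1, b2} : Finset (T1V k)) := by
      intro v hv
      simp only [Finset.mem_filter] at hv
      cases v with
      | p i j => simp [hc] at hv
      | v0 => simp
      | a => simp
      | b1 => simp
      | b2 => simp
    by_contra hlt
    push_neg at hlt
    have h4 : ({v0, a, b1, b2} : Finset (T1V k)).card = 4 := by
      rw [Finset.card_insert_of_notMem (by simp), Finset.card_insert_of_notMem (by simp),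
        Finset.card_insert_of_notMem (by simp)]
      simp
    have heq : (F.filter fun v => c v = none) = ({v0, a, b1, b2} : Finset (T1V k)) :=
      Finset.eq_of_subset_of_card_le hsub (by omega)
    have hv0 : (v0 : T1V k) ∈ F := by
      have : (v0 : T1V k) ∈ F.filter fun v => c v = none := by rw [heq]; simp
      exact (Finset.mem_filter.1 this).1
    have ha : (a : T1V k) ∈ F := by
      have : (a : T1V k) ∈ F.filter fun v => c v = none := by rw [heq]; simp
      exact (Finset.mem_filter.1 this).1
    have hb1 : (b1 : T1V k) ∈ F := by
      have : (b1 : T1V k) ∈ F.filter fun v => c v = none := by rw [heq]; simp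
      exact (Finset.mem_filter.1 this).1
    have := hd v0 hv0 a ha b1 hb1 hadj_v0a hadj_v0b1
    simp at this
  have hsome : ∀ i : Fin k, (F.filter fun v => c v = some i).card ≤ 2 := by
    intro i
    have hsub : (F.filter fun v => c v = some i) ⊆ ({p i 0, p i 1, p i 2} : Finset (T1V k)) := by
      intro v hv
      simp only [Finset.mem_filter] at hv
      cases v with
      | p j m =>
        simp only [hc, Option.some.injEq] at hv
        obtain ⟨-, rfl⟩ := hv
        fin_cases m <;> simp
      | v0 => simp [hc] at hv
      | a => simp [hc] at hv
      | b1 => simp [hc] at hv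
      | b2 => simp [hc] at hv
    by_contra hlt
    push_neg at hlt
    have h3 : ({p i 0, p i 1, p i 2} : Finset (T1V k)).card = 3 := by
      rw [Finset.card_insert_of_notMem (by simp), Finset.card_insert_of_notMem (by simp)]
      simp
    have heq : (F.filter fun v => c v = some i) = ({p i 0, p i 1, p i 2} : Finset (T1V k)) :=
      Finset.eq_of_subset_of_card_le hsub (by omega)
    have h0 : p i 0 ∈ F := by
      have : p i 0 ∈ F.filter fun v => c v = some i := by rw [heq]; simp
      exact (Finset.mem_filter.1 this).1
    have h1 : p i 1 ∈ F := by
      have : p i 1 ∈ F.filter fun v => c v = some i := by rw [heq]; simp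
      exact (Finset.mem_filter.1 this).1
    have h2 : p i 2 ∈ F := by
      have : p i 2 ∈ F.filter fun v => c v = some i := by rw [heq]; simp
      exact (Finset.mem_filter.1 this).1
    have := hd (p i 1) h1 (p i 0) h0 (p i 2) h2 (hadj_p10 i) (hadj_p12 i)
    simp at this
  rw [hcard, Fintype.sum_option]
  calc (F.filter fun v => c v = none).card
        + ∑ i : Fin k, (F.filter fun v => c v = some i).card
      ≤ 3 + ∑ i : Fin k, 2 := by
        exact Nat.add_le_add hnone (Finset.sum_le_sum fun i _ => hsome i)
    _ = 2 * k + 3 := by simp [Finset.sum_const, mul_comm]; ring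

open T1V in
lemma T1_lower (k : ℕ) : 2 * k + 3 ≤ dissocNum (T1 k) := by
  classical
  set F₀ : Finset (T1V k) := ({a, b1, b2} : Finset (T1V k))
    ∪ Finset.univ.image (fun i : Fin k => p i 1)
    ∪ Finset.univ.image (fun i : Fin k => p i 2) with hF₀
  have hmem : ∀ v : T1V k, v ∈ F₀ ↔
      v = a ∨ v = b1 ∨ v = b2 ∨ (∃ i, v = p i 1) ∨ (∃ i, v = p i 2) := by
    intro v
    simp [hF₀, eq_comm, or_assoc]
  have hv0 : (v0 : T1V k) ∉ F₀ := by simp [hmem]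
  have hp0 : ∀ i : Fin k, p i 0 ∉ F₀ := by intro i; simp [hmem]
  have hdiss : IsDissoc (T1 k) F₀ := by
    intro v hv u hu w hw hvu hvw
    rw [hmem] at hv hu hw
    rcases hv with rfl | rfl | rfl | ⟨i, rfl⟩ | ⟨i, rfl⟩
    · -- v = a : only neighbor is v0
      exfalso
      simp [T1, SimpleGraph.fromRel_adj] at hvu
      obtain ⟨-, rfl⟩ := hvu
      exact hv0 ((hmem _).2 hu)
    · -- v = b1 : neighbors v0, b2; v0 ∉ F₀
      have hu' : u = b2 := by
        simp [T1, SimpleGraph.fromRel_adj] at hvu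
        obtain ⟨-, rfl | rfl⟩ := hvu
        · rfl
        · exact absurd ((hmem _).2 hu) hv0
      have hw' : w = b2 := by
        simp [T1, SimpleGraph.fromRel_adj] at hvw
        obtain ⟨-, rfl | rfl⟩ := hvw
        · rfl
        · exact absurd ((hmem _).2 hw) hv0
      rw [hu', hw']
    · -- v = b2 : only neighbor b1
      have hu' : u = b1 := by simp [T1, SimpleGraph.fromRel_adj] at hvu; tauto
      have hw' : w = b1 := by simp [T1, SimpleGraph.fromRel_adj] at hvw; tauto
      rw [hu', hw']
    · -- v = p i 1 : neighbors p i 0 (∉ F₀), p i 2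
      have hu' : u = p i 2 := by
        simp [T1, SimpleGraph.fromRel_adj] at hvu
        obtain ⟨-, rfl | rfl⟩ := hvu
        · rfl
        · exact absurd ((hmem _).2 hu) (hp0 i)
      have hw' : w = p i 2 := by
        simp [T1, SimpleGraph.fromRel_adj] at hvw
        obtain ⟨-, rfl | rfl⟩ := hvw
        · rfl
        · exact absurd ((hmem _).2 hw) (hp0 i)
      rw [hu', hw']
    · -- v = p i 2 : only neighbor p i 1
      have hu' : u = p i 1 := by simp [T1, SimpleGraph.fromRel_adj] at hvu; tauto
      have hw' : w = p i 1 := by simp [T1, SimpleGraph.fromRel_adj] at hvw; tauto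
      rw [hu', hw']
  have hcard : F₀.card = 2 * k + 3 := by
    rw [hF₀]
    rw [Finset.card_union_of_disjoint, Finset.card_union_of_disjoint]
    · rw [Finset.card_image_of_injective _ (fun i j h => by injection h),
        Finset.card_image_of_injective _ (fun i j h => by injection h)]
      simp; ring
    · rw [Finset.disjoint_left]; intro x hx hx2
      simp only [Finset.mem_insert, Finset.mem_singleton] at hx
      rcases hx with rfl | rfl | rfl <;> simp at hx2
    · rw [Finset.disjoint_left]; intro x hx hx2
      simp only [Finset.mem_union, Finset.mem_insert, Finset.mem_singleton,
        Finset.mem_image, Finset.mem_univ, true_and] at hx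
      rcases hx with (rfl | rfl | rfl) | ⟨i, rfl⟩ <;> simp at hx2
  have : F₀ ∈ Finset.univ.filter fun F : Finset (T1V k) => IsDissoc (T1 k) F := by
    simp [hdiss]
  calc 2 * k + 3 = F₀.card := hcard.symm
    _ ≤ _ := Finset.le_sup (f := Finset.card) this

/-- The tree `T1 k` has dissociation number `2k + 3`. -/
theorem stmt_8 (k : ℕ) : dissocNum (T1 k) = 2 * k + 3 := by
  refine le_antisymm ?_ (T1_lower k)
  exact Finset.sup_le fun F hF => T1_dissoc_card_le k F (by simpa using hF)
end

section
/- Let T be the tree obtained from 2 disjoint copies of P₂ and k ≥ 0 disjoint copies of P₃ by fixing a vertex v₀ in one copy of P₂ and joining v₀ to one vertex of the other copy of P₂ and to a leaf of each copy of P₃. Then T has exactly 3^k + 1 maximum dissociation sets, and exactly 3^k of them do not contain v₀. -/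
open Finset

variable {V : Type*} [Fintype V] [DecidableEq V]

open Classical in

variable {k : ℕ}

lemma adj_v0' (y : T1V k) : (T1 k).Adj T1V.v0 y ↔ (y = T1V.a ∨ y = T1V.b1 ∨ ∃ i, y = T1V.p i 0) := by
  simp [T1, SimpleGraph.fromRel_adj]; aesop

lemma adj_a' (y : T1V k) : (T1 k).Adj T1V.a y ↔ y = T1V.v0 := by
  simp [T1, SimpleGraph.fromRel_adj]; aesop

lemma adj_b1' (y : T1V k) : (T1 k).Adj T1V.b1 y ↔ y = T1V.v0 ∨ y = T1V.b2 := by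
  simp [T1, SimpleGraph.fromRel_adj]; aesop

lemma adj_b2' (y : T1V k) : (T1 k).Adj T1V.b2 y ↔ y = T1V.b1 := by
  simp [T1, SimpleGraph.fromRel_adj]; aesop

lemma adj_p0' (i : Fin k) (y : T1V k) : (T1 k).Adj (T1V.p i 0) y ↔ y = T1V.v0 ∨ y = T1V.p i 1 := by
  simp [T1, SimpleGraph.fromRel_adj]; aesop

lemma adj_p1' (i : Fin k) (y : T1V k) : (T1 k).Adj (T1V.p i 1) y ↔ y = T1V.p i 0 ∨ y = T1V.p i 2 := by
  simp [T1, SimpleGraph.fromRel_adj]; aesop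

lemma adj_p2' (i : Fin k) (y : T1V k) : (T1 k).Adj (T1V.p i 2) y ↔ y = T1V.p i 1 := by
  simp [T1, SimpleGraph.fromRel_adj]; aesop
lemma fin3 (x : Fin 3) : x = 0 ∨ x = 1 ∨ x = 2 := by omega

lemma p_inj {i : Fin k} : Function.Injective (T1V.p i) := by
  intro x y h; simpa using h

/-- The unique max dissociation set containing v0. -/
def S0k (k : ℕ) : Finset (T1V k) :=
  {T1V.v0, T1V.a, T1V.b2} ∪ Finset.univ.biUnion (fun i : Fin k => {T1V.p i 1, T1V.p i 2})

/-- The max dissociation sets avoiding v0, indexed by which path vertex is omitted. -/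
def Sfk (k : ℕ) (f : Fin k → Fin 3) : Finset (T1V k) :=
  {T1V.a, T1V.b1, T1V.b2} ∪
    Finset.univ.biUnion (fun i : Fin k => (Finset.univ.erase (f i)).image (T1V.p i))

lemma mem_S0 (x : T1V k) :
    x ∈ S0k k ↔ x = T1V.v0 ∨ x = T1V.a ∨ x = T1V.b2 ∨ ∃ i, x = T1V.p i 1 ∨ x = T1V.p i 2 := by
  simp [S0k]

lemma mem_Sf (f : Fin k → Fin 3) (x : T1V k) :
    x ∈ Sfk k f ↔ x = T1V.a ∨ x = T1V.b1 ∨ x = T1V.b2 ∨ ∃ i j, j ≠ f i ∧ x = T1V.p i j := by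
  simp [Sfk]; aesop

lemma dissoc_S0 : IsDissoc (T1 k) (S0k k) := by
  intro v hv u hu w hw h1 h2
  rw [mem_S0] at hv hu hw
  obtain rfl | rfl | rfl | ⟨i, rfl | rfl⟩ := hv
  · rw [adj_v0'] at h1 h2; aesop
  · rw [adj_a'] at h1 h2; aesop
  · rw [adj_b2'] at h1 h2; aesop
  · rw [adj_p1'] at h1 h2; aesop
  · rw [adj_p2'] at h1 h2; aesop

lemma dissoc_Sf (f : Fin k → Fin 3) : IsDissoc (T1 k) (Sfk k f) := by
  intro v hv u hu w hw h1 h2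
  rw [mem_Sf] at hv hu hw
  obtain rfl | rfl | rfl | ⟨i, j, hj, rfl⟩ := hv
  · rw [adj_a'] at h1 h2; aesop
  · rw [adj_b1'] at h1 h2; aesop
  · rw [adj_b2'] at h1 h2; aesop
  · have h3 := fin3 (f i)
    obtain rfl | rfl | rfl := fin3 j
    · rw [adj_p0'] at h1 h2; aesop
    · rw [adj_p1'] at h1 h2; aesop
    · rw [adj_p2'] at h1 h2; aesop
lemma card_S0 : (S0k k).card = 2 * k + 3 := by
  rw [S0k, Finset.card_union_of_disjoint, Finset.card_biUnion]
  · have h3 : ({T1V.v0, T1V.a, T1V.b2} : Finset (T1V k)).card = 3 := by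
      rw [Finset.card_insert_of_notMem (by simp), Finset.card_insert_of_notMem (by simp),
        Finset.card_singleton]
    have h2 : ∀ i : Fin k, ({T1V.p i 1, T1V.p i 2} : Finset (T1V k)).card = 2 := by
      intro i; rw [Finset.card_insert_of_notMem (by simp), Finset.card_singleton]
    rw [h3, Finset.sum_congr rfl (fun i _ => h2 i), Finset.sum_const, smul_eq_mul,
      Finset.card_univ, Fintype.card_fin]
    ring
  · intro i _ j _ hij
    simp only [Finset.disjoint_left, Finset.mem_insert, Finset.mem_singleton]
    rintro x (rfl | rfl) <;> simp [T1V.p.injEq, hij]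
  · simp only [Finset.disjoint_left, Finset.mem_insert, Finset.mem_singleton,
      Finset.mem_biUnion]
    rintro x (rfl | rfl | rfl) <;> simp

lemma card_Sf (f : Fin k → Fin 3) : (Sfk k f).card = 2 * k + 3 := by
  rw [Sfk, Finset.card_union_of_disjoint, Finset.card_biUnion]
  · have h3 : ({T1V.a, T1V.b1, T1V.b2} : Finset (T1V k)).card = 3 := by
      rw [Finset.card_insert_of_notMem (by simp), Finset.card_insert_of_notMem (by simp),
        Finset.card_singleton]
    have h2 : ∀ i : Fin k, ((Finset.univ.erase (f i)).image (T1V.p i)).card = 2 := by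
      intro i
      rw [Finset.card_image_of_injective _ p_inj, Finset.card_erase_of_mem (by simp)]
      simp
    rw [h3, Finset.sum_congr rfl (fun i _ => h2 i), Finset.sum_const, smul_eq_mul,
      Finset.card_univ, Fintype.card_fin]
    ring
  · intro i _ j _ hij
    simp only [Finset.disjoint_left, Finset.mem_image, Finset.mem_erase]
    rintro x ⟨j1, hj1, rfl⟩ ⟨j2, hj2, h⟩
    obtain ⟨h1, -⟩ : j = i ∧ j2 = j1 := by simpa using h
    exact hij h1.symm
  · simp only [Finset.disjoint_left, Finset.mem_insert, Finset.mem_singleton,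
      Finset.mem_biUnion]
    rintro x (rfl | rfl | rfl) <;> simp
/-- Block index: {v0,a} ↦ 0, {b1,b2} ↦ 1, path i ↦ i+2. -/
def blk : T1V k → ℕ
  | T1V.v0 => 0
  | T1V.a => 0
  | T1V.b1 => 1
  | T1V.b2 => 1
  | T1V.p i _ => i + 2

open Classical in
lemma card_fiberwise (F : Finset (T1V k)) :
    F.card = ∑ t ∈ Finset.range (k + 2), (F.filter fun x => blk x = t).card := by
  apply Finset.card_eq_sum_card_fiberwise
  intro x _
  rw [Finset.mem_coe, Finset.mem_range]
  cases x with
  | v0 => simp [blk]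
  | a => simp [blk]
  | b1 => simp [blk]
  | b2 => simp [blk]
  | p i j => simp only [blk]; omega

open Classical in
lemma fiber0_subset (F : Finset (T1V k)) :
    (F.filter fun x => blk x = 0) ⊆ {T1V.v0, T1V.a} := by
  intro x hx
  rw [Finset.mem_filter] at hx
  obtain ⟨-, h⟩ := hx
  cases x with
  | v0 => simp
  | a => simp
  | b1 => simp [blk] at h
  | b2 => simp [blk] at h
  | p i j => simp only [blk] at h; omega

open Classical in
lemma fiber1_subset (F : Finset (T1V k)) :
    (F.filter fun x => blk x = 1) ⊆ {T1V.b1, T1V.b2} := by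
  intro x hx
  rw [Finset.mem_filter] at hx
  obtain ⟨-, h⟩ := hx
  cases x with
  | v0 => simp [blk] at h
  | a => simp [blk] at h
  | b1 => simp
  | b2 => simp
  | p i j => simp only [blk] at h; omega

open Classical in
lemma fiberP_subset (F : Finset (T1V k)) (i : Fin k) :
    (F.filter fun x => blk x = (i : ℕ) + 2) ⊆ {T1V.p i 0, T1V.p i 1, T1V.p i 2} := by
  intro x hx
  rw [Finset.mem_filter] at hx
  obtain ⟨-, h⟩ := hx
  cases x with
  | v0 => simp [blk] at h
  | a => simp [blk] at h
  | b1 => simp [blk] at h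
  | b2 => simp [blk] at h
  | p i' j =>
    simp only [blk] at h
    have hii : i' = i := Fin.ext (by omega)
    subst hii
    obtain rfl | rfl | rfl := fin3 j <;> simp

open Classical in
lemma fiber0_le (F : Finset (T1V k)) : (F.filter fun x => blk x = 0).card ≤ 2 :=
  le_trans (Finset.card_le_card (fiber0_subset F)) (by
    apply le_trans (Finset.card_insert_le _ _); simp)

open Classical in
lemma fiber1_le (F : Finset (T1V k)) : (F.filter fun x => blk x = 1).card ≤ 2 :=
  le_trans (Finset.card_le_card (fiber1_subset F)) (by
    apply le_trans (Finset.card_insert_le _ _); simp)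

open Classical in
lemma fiberP_le (F : Finset (T1V k)) (hF : IsDissoc (T1 k) F) (i : Fin k) :
    (F.filter fun x => blk x = (i : ℕ) + 2).card ≤ 2 := by
  by_contra h
  push_neg at h
  have htriple : ({T1V.p i 0, T1V.p i 1, T1V.p i 2} : Finset (T1V k)).card = 3 := by
    rw [Finset.card_insert_of_notMem (by simp), Finset.card_insert_of_notMem (by simp),
      Finset.card_singleton]
  have heq : (F.filter fun x => blk x = (i : ℕ) + 2) = {T1V.p i 0, T1V.p i 1, T1V.p i 2} :=
    Finset.eq_of_subset_of_card_le (fiberP_subset F i) (by omega)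
  have h0 : T1V.p i 0 ∈ F := (Finset.mem_filter.1 (heq ▸ (by simp : T1V.p i 0 ∈ ({T1V.p i 0, T1V.p i 1, T1V.p i 2} : Finset (T1V k))))).1
  have h1 : T1V.p i 1 ∈ F := (Finset.mem_filter.1 (heq ▸ (by simp : T1V.p i 1 ∈ ({T1V.p i 0, T1V.p i 1, T1V.p i 2} : Finset (T1V k))))).1
  have h2 : T1V.p i 2 ∈ F := (Finset.mem_filter.1 (heq ▸ (by simp : T1V.p i 2 ∈ ({T1V.p i 0, T1V.p i 1, T1V.p i 2} : Finset (T1V k))))).1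
  have := hF _ h1 _ h0 _ h2 ((adj_p1' i _).2 (Or.inl rfl)) ((adj_p1' i _).2 (Or.inr rfl))
  simp at this

open Classical in
lemma fiber_le (F : Finset (T1V k)) (hF : IsDissoc (T1 k) F) (t : ℕ) (ht : t ∈ Finset.range (k+2)) :
    (F.filter fun x => blk x = t).card ≤ 2 := by
  rw [Finset.mem_range] at ht
  match t, ht with
  | 0, _ => exact fiber0_le F
  | 1, _ => exact fiber1_le F
  | (n+2), h =>
    have hn : n < k := by omega
    have := fiberP_le F hF ⟨n, hn⟩
    simpa using this
open Classical in
lemma dissoc_card_le (F : Finset (T1V k)) (hF : IsDissoc (T1 k) F) : F.card ≤ 2 * k + 3 := by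
  by_contra h
  push_neg at h
  have hsum := card_fiberwise F
  have hle : ∑ t ∈ Finset.range (k + 2), (F.filter fun x => blk x = t).card ≤
      ∑ t ∈ Finset.range (k + 2), 2 :=
    Finset.sum_le_sum (fun t ht => fiber_le F hF t ht)
  rw [Finset.sum_const, Finset.card_range, smul_eq_mul] at hle
  have hfull : ∀ t ∈ Finset.range (k + 2), (F.filter fun x => blk x = t).card = 2 := by
    have heq : ∑ t ∈ Finset.range (k + 2), (F.filter fun x => blk x = t).card =
        ∑ t ∈ Finset.range (k + 2), 2 := by
      rw [Finset.sum_const, Finset.card_range, smul_eq_mul]; omega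
    exact fun t ht => (Finset.sum_eq_sum_iff_of_le (fun t ht => fiber_le F hF t ht)).1 heq t ht
  have h0 : (F.filter fun x => blk x = 0) = {T1V.v0, T1V.a} := by
    apply Finset.eq_of_subset_of_card_le (fiber0_subset F)
    rw [hfull 0 (by simp)]
    apply le_trans (Finset.card_insert_le _ _); simp
  have h1 : (F.filter fun x => blk x = 1) = {T1V.b1, T1V.b2} := by
    apply Finset.eq_of_subset_of_card_le (fiber1_subset F)
    rw [hfull 1 (by simp [Finset.mem_range])]
    apply le_trans (Finset.card_insert_le _ _); simp
  have hv0 : T1V.v0 ∈ F := (Finset.mem_filter.1 (h0 ▸ (by simp : T1V.v0 ∈ ({T1V.v0, T1V.a} : Finset (T1V k))))).1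
  have ha : T1V.a ∈ F := (Finset.mem_filter.1 (h0 ▸ (by simp : T1V.a ∈ ({T1V.v0, T1V.a} : Finset (T1V k))))).1
  have hb1 : T1V.b1 ∈ F := (Finset.mem_filter.1 (h1 ▸ (by simp : T1V.b1 ∈ ({T1V.b1, T1V.b2} : Finset (T1V k))))).1
  have := hF _ hv0 _ ha _ hb1 ((adj_v0' _).2 (Or.inl rfl)) ((adj_v0' _).2 (Or.inr (Or.inl rfl)))
  simp at this

open Classical in
lemma dissocNum_T1 : dissocNum (T1 k) = 2 * k + 3 := by
  apply le_antisymm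
  · apply Finset.sup_le
    intro F hF
    rw [Finset.mem_filter] at hF
    exact dissoc_card_le F hF.2
  · calc 2 * k + 3 = (S0k k).card := card_S0.symm
    _ ≤ _ := Finset.le_sup (f := Finset.card)
        (Finset.mem_filter.2 ⟨Finset.mem_univ _, dissoc_S0⟩)

/-- If a sum of (k+2) terms each ≤ 2 equals 2(k+2) - 1, exactly one term is 1. -/
lemma one_deficient {ι : Type*} [DecidableEq ι] (s : Finset ι) (f : ι → ℕ)
    (hle : ∀ t ∈ s, f t ≤ 2) (hsum : (∑ t ∈ s, f t) + 1 = 2 * s.card) :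
    ∃ t₀ ∈ s, f t₀ = 1 ∧ ∀ t ∈ s, t ≠ t₀ → f t = 2 := by
  have h1 : ∑ t ∈ s, f t < ∑ t ∈ s, 2 := by
    rw [Finset.sum_const, smul_eq_mul]; omega
  obtain ⟨t₀, ht₀, hlt⟩ := Finset.exists_lt_of_sum_lt h1
  have herase := Finset.sum_erase_add s f ht₀
  have hb : ∑ t ∈ s.erase t₀, f t ≤ 2 * (s.card - 1) := by
    calc ∑ t ∈ s.erase t₀, f t ≤ ∑ t ∈ s.erase t₀, 2 :=
          Finset.sum_le_sum (fun t ht => hle t (Finset.mem_of_mem_erase ht))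
    _ = 2 * (s.card - 1) := by
          rw [Finset.sum_const, smul_eq_mul, Finset.card_erase_of_mem ht₀]; ring
  have hcard : 1 ≤ s.card := Finset.card_pos.2 ⟨t₀, ht₀⟩
  have hf1 : f t₀ = 1 := by omega
  refine ⟨t₀, ht₀, hf1, ?_⟩
  have heq : ∑ t ∈ s.erase t₀, f t = ∑ t ∈ s.erase t₀, 2 := by
    rw [Finset.sum_const, smul_eq_mul, Finset.card_erase_of_mem ht₀]; omega
  intro t ht hne
  exact (Finset.sum_eq_sum_iff_of_le
    (fun t ht => hle t (Finset.mem_of_mem_erase ht))).1 heq t (Finset.mem_erase.2 ⟨hne, ht⟩)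
open Classical in
lemma fiber0_full (F : Finset (T1V k)) (h : (F.filter fun x => blk x = 0).card = 2) :
    T1V.v0 ∈ F ∧ T1V.a ∈ F := by
  have hc2 : ({T1V.v0, T1V.a} : Finset (T1V k)).card ≤ 2 := by
    apply le_trans (Finset.card_insert_le _ _); simp
  have heq : (F.filter fun x => blk x = 0) = {T1V.v0, T1V.a} :=
    Finset.eq_of_subset_of_card_le (fiber0_subset F) (by omega)
  constructor
  · exact (Finset.mem_filter.1 (heq ▸ (by simp : T1V.v0 ∈ ({T1V.v0, T1V.a} : Finset (T1V k))))).1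
  · exact (Finset.mem_filter.1 (heq ▸ (by simp : T1V.a ∈ ({T1V.v0, T1V.a} : Finset (T1V k))))).1

open Classical in
lemma fiber1_full (F : Finset (T1V k)) (h : (F.filter fun x => blk x = 1).card = 2) :
    T1V.b1 ∈ F ∧ T1V.b2 ∈ F := by
  have hc2 : ({T1V.b1, T1V.b2} : Finset (T1V k)).card ≤ 2 := by
    apply le_trans (Finset.card_insert_le _ _); simp
  have heq : (F.filter fun x => blk x = 1) = {T1V.b1, T1V.b2} :=
    Finset.eq_of_subset_of_card_le (fiber1_subset F) (by omega)
  constructor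
  · exact (Finset.mem_filter.1 (heq ▸ (by simp : T1V.b1 ∈ ({T1V.b1, T1V.b2} : Finset (T1V k))))).1
  · exact (Finset.mem_filter.1 (heq ▸ (by simp : T1V.b2 ∈ ({T1V.b1, T1V.b2} : Finset (T1V k))))).1

open Classical in
lemma path_pattern (F : Finset (T1V k)) (i : Fin k)
    (h2 : (F.filter fun x => blk x = (i : ℕ) + 2).card = 2) :
    ∃ j : Fin 3, T1V.p i j ∉ F ∧ ∀ j', j' ≠ j → T1V.p i j' ∈ F := by
  have htriple : ({T1V.p i 0, T1V.p i 1, T1V.p i 2} : Finset (T1V k)).card = 3 := by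
    rw [Finset.card_insert_of_notMem (by simp), Finset.card_insert_of_notMem (by simp),
      Finset.card_singleton]
  have hne : (F.filter fun x => blk x = (i : ℕ) + 2) ≠
      ({T1V.p i 0, T1V.p i 1, T1V.p i 2} : Finset (T1V k)) := fun h => by
    rw [h] at h2; omega
  obtain ⟨x, hxt, hxs⟩ :=
    Finset.exists_of_ssubset (ssubset_of_subset_of_ne (fiberP_subset F i) hne)
  have hxj : ∃ j : Fin 3, x = T1V.p i j := by
    simp only [Finset.mem_insert, Finset.mem_singleton] at hxt
    rcases hxt with rfl | rfl | rfl
    exacts [⟨0, rfl⟩, ⟨1, rfl⟩, ⟨2, rfl⟩]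
  obtain ⟨j, rfl⟩ := hxj
  refine ⟨j, fun hmem => hxs (Finset.mem_filter.2 ⟨hmem, by simp [blk]⟩), fun j' hj' => ?_⟩
  have hsub2 : (F.filter fun x => blk x = (i : ℕ) + 2) ⊆
      ({T1V.p i 0, T1V.p i 1, T1V.p i 2} : Finset (T1V k)).erase (T1V.p i j) :=
    fun y hy => Finset.mem_erase.2 ⟨fun h => hxs (h ▸ hy), fiberP_subset F i hy⟩
  have hcerase : (({T1V.p i 0, T1V.p i 1, T1V.p i 2} : Finset (T1V k)).erase (T1V.p i j)).card = 2 := by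
    rw [Finset.card_erase_of_mem]
    · omega
    · obtain rfl | rfl | rfl := fin3 j <;> simp
  have heq : (F.filter fun x => blk x = (i : ℕ) + 2) =
      ({T1V.p i 0, T1V.p i 1, T1V.p i 2} : Finset (T1V k)).erase (T1V.p i j) :=
    Finset.eq_of_subset_of_card_le hsub2 (by omega)
  have hmem : T1V.p i j' ∈ ({T1V.p i 0, T1V.p i 1, T1V.p i 2} : Finset (T1V k)).erase (T1V.p i j) := by
    refine Finset.mem_erase.2 ⟨fun h => hj' (by simpa using h), ?_⟩
    obtain rfl | rfl | rfl := fin3 j' <;> simp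
  exact (Finset.mem_filter.1 (heq ▸ hmem)).1
open Classical in
lemma classify (F : Finset (T1V k)) (hF : IsDissoc (T1 k) F) (hc : F.card = 2 * k + 3) :
    F = S0k k ∨ ∃ f : Fin k → Fin 3, F = Sfk k f := by
  obtain ⟨t₀, ht₀, hdef, hfull⟩ := one_deficient (Finset.range (k + 2))
      (fun t => (F.filter fun x => blk x = t).card)
      (fun t ht => fiber_le F hF t ht)
      (by rw [← card_fiberwise F, hc, Finset.card_range]; ring)
  rw [Finset.mem_range] at ht₀
  match t₀, ht₀ with
  | (n+2), hn =>
    -- both fibers 0 and 1 are full: contradiction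
    exfalso
    obtain ⟨hv0, ha⟩ := fiber0_full F (hfull 0 (by simp) (by omega))
    obtain ⟨hb1, -⟩ := fiber1_full F (hfull 1 (by simp [Finset.mem_range]) (by omega))
    have := hF _ hv0 _ ha _ hb1 ((adj_v0' _).2 (Or.inl rfl))
      ((adj_v0' _).2 (Or.inr (Or.inl rfl)))
    simp at this
  | 1, _ =>
    -- F = S0
    left
    obtain ⟨hv0, ha⟩ := fiber0_full F (hfull 0 (by simp) (by omega))
    have hb1 : T1V.b1 ∉ F := fun hb1 => by
      have := hF _ hv0 _ ha _ hb1 ((adj_v0' _).2 (Or.inl rfl))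
        ((adj_v0' _).2 (Or.inr (Or.inl rfl)))
      simp at this
    have hb2 : T1V.b2 ∈ F := by
      obtain ⟨x, hx⟩ := Finset.card_pos.1 (by rw [hdef]; omega :
        0 < (F.filter fun x => blk x = 1).card)
      have hx2 := fiber1_subset F hx
      simp only [Finset.mem_insert, Finset.mem_singleton] at hx2
      rcases hx2 with rfl | rfl
      · exact absurd (Finset.mem_filter.1 hx).1 hb1
      · exact (Finset.mem_filter.1 hx).1
    have hp0 : ∀ i : Fin k, T1V.p i 0 ∉ F := fun i hp => by
      have := hF _ hv0 _ ha _ hp ((adj_v0' _).2 (Or.inl rfl))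
        ((adj_v0' _).2 (Or.inr (Or.inr ⟨i, rfl⟩)))
      simp at this
    have hp12 : ∀ i : Fin k, T1V.p i 1 ∈ F ∧ T1V.p i 2 ∈ F := by
      intro i
      obtain ⟨j, hj, hj'⟩ := path_pattern F i
        (hfull ((i : ℕ) + 2) (by simp only [Finset.mem_range]; omega) (by omega))
      obtain rfl | rfl | rfl := fin3 j
      · exact ⟨hj' 1 (by simp), hj' 2 (by simp)⟩
      · exact absurd (hj' 0 (by simp)) (hp0 i)
      · exact absurd (hj' 0 (by simp)) (hp0 i)
    have hsub : S0k k ⊆ F := by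
      intro x hx
      rw [mem_S0] at hx
      obtain rfl | rfl | rfl | ⟨i, rfl | rfl⟩ := hx
      exacts [hv0, ha, hb2, (hp12 i).1, (hp12 i).2]
    exact (Finset.eq_of_subset_of_card_le hsub (by rw [hc, card_S0])).symm
  | 0, _ =>
    -- F = Sf for some f
    right
    obtain ⟨hb1, hb2⟩ := fiber1_full F (hfull 1 (by simp [Finset.mem_range]) (by omega))
    have hv0 : T1V.v0 ∉ F := fun hv0 => by
      have := hF _ hb1 _ hv0 _ hb2 ((adj_b1' _).2 (Or.inl rfl)) ((adj_b1' _).2 (Or.inr rfl))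
      simp at this
    have ha : T1V.a ∈ F := by
      obtain ⟨x, hx⟩ := Finset.card_pos.1 (by rw [hdef]; omega :
        0 < (F.filter fun x => blk x = 0).card)
      have hx2 := fiber0_subset F hx
      simp only [Finset.mem_insert, Finset.mem_singleton] at hx2
      rcases hx2 with rfl | rfl
      · exact absurd (Finset.mem_filter.1 hx).1 hv0
      · exact (Finset.mem_filter.1 hx).1
    have hpat : ∀ i : Fin k, ∃ j : Fin 3, T1V.p i j ∉ F ∧ ∀ j', j' ≠ j → T1V.p i j' ∈ F :=
      fun i => path_pattern F i
        (hfull ((i : ℕ) + 2) (by simp only [Finset.mem_range]; omega) (by omega))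
    choose f hf1 hf2 using hpat
    refine ⟨f, ?_⟩
    have hsub : Sfk k f ⊆ F := by
      intro x hx
      rw [mem_Sf] at hx
      obtain rfl | rfl | rfl | ⟨i, j, hj, rfl⟩ := hx
      exacts [ha, hb1, hb2, hf2 i j hj]
    exact (Finset.eq_of_subset_of_card_le hsub (by rw [hc, card_Sf])).symm
lemma v0_mem_S0 : T1V.v0 ∈ S0k k := by rw [mem_S0]; left; rfl

lemma v0_not_mem_Sf (f : Fin k → Fin 3) : T1V.v0 ∉ Sfk k f := by
  rw [mem_Sf]; simp

lemma Sf_injective : Function.Injective (Sfk k) := by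
  intro f g h
  funext i
  by_contra hne
  have h1 : T1V.p i (f i) ∈ Sfk k g := (mem_Sf g _).2 (Or.inr (Or.inr (Or.inr ⟨i, f i, hne, rfl⟩)))
  have h2 : T1V.p i (f i) ∉ Sfk k f := by
    rw [mem_Sf]; simp
  rw [h] at h2
  exact h2 h1

open Classical in
lemma maxDissoc_iff (F : Finset (T1V k)) :
    IsMaxDissoc (T1 k) F ↔ (F = S0k k ∨ ∃ f : Fin k → Fin 3, F = Sfk k f) := by
  constructor
  · rintro ⟨hd, hcard⟩
    exact classify F hd (by rw [hcard, dissocNum_T1])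
  · rintro (rfl | ⟨f, rfl⟩)
    · exact ⟨dissoc_S0, by rw [card_S0, dissocNum_T1]⟩
    · exact ⟨dissoc_Sf f, by rw [card_Sf, dissocNum_T1]⟩

open Classical in
theorem stmt_9' (k : ℕ) :
    numMaxDissoc (T1 k) = 3 ^ k + 1 ∧
      (Finset.univ.filter fun F : Finset (T1V k) =>
          IsMaxDissoc (T1 k) F ∧ T1V.v0 ∉ F).card = 3 ^ k := by
  classical
  have himg : ((Finset.univ : Finset (Fin k → Fin 3)).image (Sfk k)).card = 3 ^ k := by
    rw [Finset.card_image_of_injective _ Sf_injective, Finset.card_univ]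
    simp
  have hS0img : S0k k ∉ (Finset.univ : Finset (Fin k → Fin 3)).image (Sfk k) := by
    rw [Finset.mem_image]
    rintro ⟨f, -, hf⟩
    exact v0_not_mem_Sf f (hf.symm ▸ v0_mem_S0)
  constructor
  · unfold numMaxDissoc
    have heq : (Finset.univ.filter fun F : Finset (T1V k) => IsMaxDissoc (T1 k) F) =
        insert (S0k k) ((Finset.univ : Finset (Fin k → Fin 3)).image (Sfk k)) := by
      ext F
      simp only [Finset.mem_filter, Finset.mem_univ, true_and, Finset.mem_insert,
        Finset.mem_image, maxDissoc_iff F]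
      constructor
      · rintro (rfl | ⟨f, rfl⟩)
        exacts [Or.inl rfl, Or.inr ⟨f, rfl⟩]
      · rintro (rfl | ⟨f, rfl⟩)
        exacts [Or.inl rfl, Or.inr ⟨f, rfl⟩]
    rw [heq, Finset.card_insert_of_notMem hS0img, himg]
  · have heq : (Finset.univ.filter fun F : Finset (T1V k) =>
        IsMaxDissoc (T1 k) F ∧ T1V.v0 ∉ F) =
        (Finset.univ : Finset (Fin k → Fin 3)).image (Sfk k) := by
      ext F
      simp only [Finset.mem_filter, Finset.mem_univ, true_and, Finset.mem_image, maxDissoc_iff F]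
      constructor
      · rintro ⟨rfl | ⟨f, rfl⟩, hv0⟩
        · exact absurd v0_mem_S0 hv0
        · exact ⟨f, rfl⟩
      · rintro ⟨f, rfl⟩
        exact ⟨Or.inr ⟨f, rfl⟩, v0_not_mem_Sf f⟩
    rw [heq, himg]

open Classical in
/-- The tree `T1 k` has exactly `3^k + 1` maximum dissociation sets, of which exactly
`3^k` do not contain `v0`. -/
theorem stmt_9 (k : ℕ) :
    numMaxDissoc (T1 k) = 3 ^ k + 1 ∧
      (Finset.univ.filter fun F : Finset (T1V k) =>
          IsMaxDissoc (T1 k) F ∧ T1V.v0 ∉ F).card = 3 ^ k := by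
  exact stmt_9' k
end

section
/- Let T be a tree and v a vertex of T, and let T' be obtained from T by attaching a new leaf v' adjacent to v. If some maximum dissociation set of T does not contain v, then ψ(T') = ψ(T) + 1, every maximum dissociation set of T' contains v', and the number of maximum dissociation sets of T not containing v is at most the number of maximum dissociation sets of T'. -/
open Finset

variable {V : Type*} [Fintype V] [DecidableEq V]

/-- The graph obtained from `G` by attaching a new leaf `none` adjacent to the vertex `v`. -/
def addLeaf (G : SimpleGraph V) (v : V) : SimpleGraph (Option V) :=
  SimpleGraph.fromRel fun x y =>
    (∃ a b, x = some a ∧ y = some b ∧ G.Adj a b) ∨ (x = some v ∧ y = none)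

set_option linter.unusedSectionVars false
set_option linter.unusedVariables false

lemma addLeaf_adj_iff (G : SimpleGraph V) (v : V) (x y : Option V) :
    (addLeaf G v).Adj x y ↔ (∃ a b, x = some a ∧ y = some b ∧ G.Adj a b) ∨
      (x = some v ∧ y = none) ∨ (x = none ∧ y = some v) := by
  simp only [addLeaf, SimpleGraph.fromRel_adj]
  constructor
  · rintro ⟨hne, (⟨a,b,rfl,rfl,hab⟩|⟨rfl,rfl⟩)|(⟨a,b,rfl,rfl,hab⟩|⟨rfl,rfl⟩)⟩
    · exact Or.inl ⟨a,b,rfl,rfl,hab⟩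
    · exact Or.inr (Or.inl ⟨rfl,rfl⟩)
    · exact Or.inl ⟨b,a,rfl,rfl,hab.symm⟩
    · exact Or.inr (Or.inr ⟨rfl,rfl⟩)
  · rintro (⟨a,b,rfl,rfl,hab⟩|⟨rfl,rfl⟩|⟨rfl,rfl⟩)
    · exact ⟨by simpa using hab.ne, Or.inl (Or.inl ⟨a,b,rfl,rfl,hab⟩)⟩
    · exact ⟨by simp, Or.inl (Or.inr ⟨rfl,rfl⟩)⟩
    · exact ⟨by simp, Or.inr (Or.inr ⟨rfl,rfl⟩)⟩

open Classical in
lemma card_le_dissocNum {G : SimpleGraph V} {F : Finset V} (hF : IsDissoc G F) :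
    F.card ≤ dissocNum G :=
  Finset.le_sup (by simp [hF])

/-- pulling back a dissociation set along `some` -/
lemma dissoc_pullback {G : SimpleGraph V} {v : V} {F' : Finset (Option V)}
    (hF' : IsDissoc (addLeaf G v) F') :
    IsDissoc G (Finset.univ.filter fun a => some a ∈ F') := by
  intro a ha b hb c hc hab hac
  simp only [mem_filter] at ha hb hc
  have := hF' (some a) ha.2 (some b) hb.2 (some c) hc.2
    ((addLeaf_adj_iff G v _ _).2 (Or.inl ⟨a,b,rfl,rfl,hab⟩))
    ((addLeaf_adj_iff G v _ _).2 (Or.inl ⟨a,c,rfl,rfl,hac⟩))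
  exact Option.some_injective _ this

lemma subset_insert_image (F' : Finset (Option V)) :
    F' ⊆ insert none ((Finset.univ.filter fun a => some a ∈ F').image some) := by
  intro x hx
  match x with
  | none => exact mem_insert_self _ _
  | some a => exact mem_insert_of_mem (mem_image_of_mem some (by simp [hx]))

lemma dissoc_push {G : SimpleGraph V} {v : V} {F : Finset V}
    (hF : IsDissoc G F) (hv : v ∉ F) :
    IsDissoc (addLeaf G v) (insert none (F.image some)) := by
  intro x hx u hu w hw hxu hxw
  rw [addLeaf_adj_iff] at hxu hxw
  have hmem : ∀ y : Option V, y ∈ insert none (F.image some) →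
      y = none ∨ ∃ a, a ∈ F ∧ y = some a := by
    intro y hy
    rcases mem_insert.1 hy with h | h
    · exact Or.inl h
    · obtain ⟨a, ha, rfl⟩ := mem_image.1 h; exact Or.inr ⟨a, ha, rfl⟩
  rcases hmem x hx with rfl | ⟨a, haF, rfl⟩
  · -- x = none : both u and w must equal some v
    rcases hxu with ⟨a,b,h,_,_⟩ | ⟨h,_⟩ | ⟨_,rfl⟩
    · exact absurd h (by simp)
    · exact absurd h (by simp)
    · rcases hxw with ⟨a,b,h,_,_⟩ | ⟨h,_⟩ | ⟨_,rfl⟩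
      · exact absurd h (by simp)
      · exact absurd h (by simp)
      · rfl
  · -- x = some a
    have hu' : ∃ b, b ∈ F ∧ u = some b ∧ G.Adj a b := by
      rcases hxu with ⟨a',b,ha',hueq,hab⟩ | ⟨ha',rfl⟩ | ⟨h,_⟩
      · subst hueq
        obtain rfl : a' = a := by simpa using ha'.symm
        rcases hmem (some b) hu with h | ⟨c, hc, hcb⟩
        · exact absurd h (by simp)
        · obtain rfl : b = c := Option.some_injective _ hcb
          exact ⟨b, hc, rfl, hab⟩
      · obtain rfl : a = v := by simpa using ha'
        exact absurd haF hv
      · exact absurd h (by simp)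
    have hw' : ∃ b, b ∈ F ∧ w = some b ∧ G.Adj a b := by
      rcases hxw with ⟨a',b,ha',hweq,hab⟩ | ⟨ha',rfl⟩ | ⟨h,_⟩
      · subst hweq
        obtain rfl : a' = a := by simpa using ha'.symm
        rcases hmem (some b) hw with h | ⟨c, hc, hcb⟩
        · exact absurd h (by simp)
        · obtain rfl : b = c := Option.some_injective _ hcb
          exact ⟨b, hc, rfl, hab⟩
      · obtain rfl : a = v := by simpa using ha'
        exact absurd haF hv
      · exact absurd h (by simp)
    obtain ⟨b, hbF, rfl, hab⟩ := hu'
    obtain ⟨c, hcF, rfl, hac⟩ := hw'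
    exact congrArg some (hF a haF b hbF c hcF hab hac)


open Classical in
/-- If some maximum dissociation set of the tree `T` avoids `v`, then attaching a leaf `v'`
at `v` increases the dissociation number by exactly one, every maximum dissociation set of
the new tree contains `v'`, and the number of maximum dissociation sets of `T` avoiding `v`
is at most the number of maximum dissociation sets of the new tree. -/
theorem stmt_17 (G : SimpleGraph V) (hT : G.IsTree) (v : V)
    (h : ∃ F : Finset V, IsMaxDissoc G F ∧ v ∉ F) :
    dissocNum (addLeaf G v) = dissocNum G + 1 ∧
      (∀ F : Finset (Option V), IsMaxDissoc (addLeaf G v) F → none ∈ F) ∧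
      (Finset.univ.filter fun F : Finset V => IsMaxDissoc G F ∧ v ∉ F).card ≤
        numMaxDissoc (addLeaf G v) := by
  classical
  obtain ⟨F0, ⟨hF0d, hF0card⟩, hvF0⟩ := h
  have key : dissocNum (addLeaf G v) = dissocNum G + 1 := by
    apply le_antisymm
    · apply Finset.sup_le
      intro F' hF'
      simp only [mem_filter, mem_univ, true_and] at hF'
      calc F'.card ≤ (insert none ((Finset.univ.filter fun a => some a ∈ F').image some)).card :=
            Finset.card_le_card (subset_insert_image F')
        _ ≤ ((Finset.univ.filter fun a => some a ∈ F').image some).card + 1 :=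
            Finset.card_insert_le _ _
        _ ≤ (Finset.univ.filter fun a => some a ∈ F').card + 1 := by
            exact Nat.add_le_add_right (Finset.card_image_le) 1
        _ ≤ dissocNum G + 1 := Nat.add_le_add_right (card_le_dissocNum (dissoc_pullback hF')) 1
    · have hd := dissoc_push hF0d hvF0
      have hcard : (insert none (F0.image some)).card = dissocNum G + 1 := by
        rw [Finset.card_insert_of_notMem (by simp),
          Finset.card_image_of_injective _ (Option.some_injective V), hF0card]
      calc dissocNum G + 1 = (insert none (F0.image some)).card := hcard.symm
        _ ≤ dissocNum (addLeaf G v) := card_le_dissocNum hd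
  refine ⟨key, ?_, ?_⟩
  · intro F' ⟨hF'd, hF'card⟩
    by_contra hnone
    have hsub : F' ⊆ (Finset.univ.filter fun a => some a ∈ F').image some := by
      intro x hx
      match x with
      | none => exact absurd hx hnone
      | some a => exact mem_image_of_mem some (by simp [hx])
    have : F'.card ≤ dissocNum G := by
      calc F'.card ≤ ((Finset.univ.filter fun a => some a ∈ F').image some).card :=
            Finset.card_le_card hsub
        _ ≤ (Finset.univ.filter fun a => some a ∈ F').card := Finset.card_image_le
        _ ≤ dissocNum G := card_le_dissocNum (dissoc_pullback hF'd)
    rw [hF'card, key] at this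
    omega
  · unfold numMaxDissoc
    apply Finset.card_le_card_of_injOn (fun F => insert none (F.image some))
    · intro F hF
      simp only [Finset.mem_coe, mem_filter, mem_univ, true_and] at hF ⊢
      obtain ⟨⟨hFd, hFcard⟩, hvF⟩ := hF
      refine ⟨dissoc_push hFd hvF, ?_⟩
      rw [Finset.card_insert_of_notMem (by simp),
        Finset.card_image_of_injective _ (Option.some_injective V), hFcard, key]
    · intro A hA B hB hAB
      have hAB' : insert none (A.image some) = insert none (B.image some) := hAB
      have h1 : A.image some = B.image some := by
        have : (insert none (A.image some)).erase none = (insert none (B.image some)).erase none := by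
          rw [hAB']
        rwa [Finset.erase_insert (by simp), Finset.erase_insert (by simp)] at this
      exact Finset.image_injective (Option.some_injective V) h1
end
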